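/- Let R be a commutative ring and E a subset of Spec(R). Then the total ring of fractions of the product ring ∏_{𝔭∈E} R/𝔭 is canonically isomorphic to ∏_{𝔭∈E} κ(𝔭), where κ(𝔭) = R_𝔭/𝔭R_𝔭 is the residue field at 𝔭. -/

import Mathlib

/-- Residue field of `R` at a prime `𝔭`, i.e. `κ(𝔭) = R_𝔭 / 𝔭 R_𝔭`. -/
noncomputable abbrev residueFieldAt {R : Type*} [CommRing R] (p : PrimeSpectrum R) :=
  IsLocalRing.ResidueField (Localization.AtPrime p.asIdeal)

section Aux

variable {R : Type*} [CommRing R] (p : PrimeSpectrum R)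

lemma algebraMap_residueFieldAt_eq_zero_iff (x : R) :
    algebraMap R (residueFieldAt p) x = 0 ↔ x ∈ p.asIdeal := by
  rw [IsScalarTower.algebraMap_apply R (Localization.AtPrime p.asIdeal) (residueFieldAt p),
    IsLocalRing.ResidueField.algebraMap_eq, IsLocalRing.residue_eq_zero_iff]
  exact IsLocalization.AtPrime.to_map_mem_maximal_iff _ p.asIdeal x

/-- The canonical map `R/𝔭 → κ(𝔭)`. -/
noncomputable def resMap : R ⧸ p.asIdeal →+* residueFieldAt p :=
  Ideal.Quotient.lift p.asIdeal (algebraMap R (residueFieldAt p))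
    (fun x hx => (algebraMap_residueFieldAt_eq_zero_iff p x).mpr hx)

@[simp] lemma resMap_mk (x : R) :
    resMap p (Ideal.Quotient.mk p.asIdeal x) = algebraMap R (residueFieldAt p) x := rfl

lemma resMap_eq_zero_iff (a : R ⧸ p.asIdeal) : resMap p a = 0 ↔ a = 0 := by
  obtain ⟨x, rfl⟩ := Ideal.Quotient.mk_surjective a
  rw [resMap_mk, algebraMap_residueFieldAt_eq_zero_iff, Ideal.Quotient.eq_zero_iff_mem]

lemma resMap_injective : Function.Injective (resMap p) := by
  rw [injective_iff_map_eq_zero]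
  exact fun a ha => (resMap_eq_zero_iff p a).mp ha

lemma resMap_surj (b : residueFieldAt p) :
    ∃ a s : R ⧸ p.asIdeal, s ≠ 0 ∧ b * resMap p s = resMap p a := by
  obtain ⟨y, rfl⟩ := IsLocalRing.residue_surjective b
  obtain ⟨⟨x, s⟩, rfl⟩ := IsLocalization.mk'_surjective p.asIdeal.primeCompl y
  refine ⟨Ideal.Quotient.mk _ x, Ideal.Quotient.mk _ (s : R), ?_, ?_⟩
  · rw [Ne, Ideal.Quotient.eq_zero_iff_mem]; exact s.2
  · rw [resMap_mk, resMap_mk,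
      IsScalarTower.algebraMap_apply R (Localization.AtPrime p.asIdeal) (residueFieldAt p),
      IsScalarTower.algebraMap_apply R (Localization.AtPrime p.asIdeal) (residueFieldAt p),
      IsLocalRing.ResidueField.algebraMap_eq, ← map_mul, IsLocalization.mk'_spec]

open nonZeroDivisors in
lemma pi_mem_nonZeroDivisors_iff {ι : Type*} {D : ι → Type*} [∀ i, CommRing (D i)]
    [∀ i, IsDomain (D i)] (a : ∀ i, D i) : a ∈ (∀ i, D i)⁰ ↔ ∀ i, a i ≠ 0 := by
  classical
  constructor
  · intro ha i hi
    have h1 : Function.update (0 : ∀ i, D i) i 1 * a = 0 := by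
      funext j
      rcases eq_or_ne j i with rfl | h
      · simp [hi]
      · simp [Function.update_of_ne h]
    have := congrFun (mem_nonZeroDivisors_iff_right.mp ha _ h1) i
    rw [Function.update_self, Pi.zero_apply] at this
    exact one_ne_zero this
  · intro ha; refine mem_nonZeroDivisors_iff_right.mpr fun b hb => ?_
    funext i
    have := congrFun hb i
    rw [Pi.mul_apply, Pi.zero_apply] at this
    exact (mul_eq_zero.mp this).resolve_right (ha i)

end Aux

open nonZeroDivisors in
/-- For a commutative ring `R` and a subset `E ⊆ Spec R`, the total ring of fractions of
`∏_{𝔭∈E} R/𝔭` is canonically isomorphic to `∏_{𝔭∈E} κ(𝔭)`: there is a ring isomorphism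
compatible with the canonical maps from `R`. -/
theorem stmt_2 {R : Type*} [CommRing R] (E : Set (PrimeSpectrum R)) :
    ∃ e : FractionRing (∀ p : E, R ⧸ (p : PrimeSpectrum R).asIdeal) ≃+*
        (∀ p : E, residueFieldAt (p : PrimeSpectrum R)),
      ∀ x : R,
        e (algebraMap (∀ p : E, R ⧸ (p : PrimeSpectrum R).asIdeal)
            (FractionRing (∀ p : E, R ⧸ (p : PrimeSpectrum R).asIdeal))
            (fun p => Ideal.Quotient.mk (p : PrimeSpectrum R).asIdeal x)) =
          fun p : E => algebraMap R (residueFieldAt (p : PrimeSpectrum R)) x := by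
  classical
  let Φ : (∀ p : E, R ⧸ (p : PrimeSpectrum R).asIdeal) →+*
      (∀ p : E, residueFieldAt (p : PrimeSpectrum R)) :=
    Pi.ringHom fun p => (resMap (p : PrimeSpectrum R)).comp (Pi.evalRingHom _ p)
  have hΦ : ∀ a p, Φ a p = resMap (p : PrimeSpectrum R) (a p) := fun _ _ => rfl
  have hΦinj : Function.Injective Φ := by
    intro a b hab
    funext p
    exact resMap_injective (p : PrimeSpectrum R) (congrFun hab p)
  letI : Algebra (∀ p : E, R ⧸ (p : PrimeSpectrum R).asIdeal)
      (∀ p : E, residueFieldAt (p : PrimeSpectrum R)) := Φ.toAlgebra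
  have halg : ∀ a, algebraMap (∀ p : E, R ⧸ (p : PrimeSpectrum R).asIdeal)
      (∀ p : E, residueFieldAt (p : PrimeSpectrum R)) a = Φ a := fun _ => rfl
  haveI : IsLocalization (∀ p : E, R ⧸ (p : PrimeSpectrum R).asIdeal)⁰
      (∀ p : E, residueFieldAt (p : PrimeSpectrum R)) := by
    refine ⟨⟨?_, ?_, ?_⟩⟩
    · rintro ⟨s, hs⟩
      rw [(pi_mem_nonZeroDivisors_iff s)] at hs
      refine IsUnit.of_mul_eq_one (fun p => (Φ s p)⁻¹) (funext fun p => ?_)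
      rw [halg, Pi.mul_apply, Pi.one_apply, mul_inv_cancel₀]
      rw [hΦ, Ne, resMap_eq_zero_iff]
      exact hs p
    · intro z
      choose a s hs hz using fun p : E => resMap_surj (p : PrimeSpectrum R) (z p)
      refine ⟨⟨a, ⟨s, (pi_mem_nonZeroDivisors_iff s).mpr hs⟩⟩, funext fun p => ?_⟩
      rw [halg, halg, Pi.mul_apply, hΦ, hΦ]
      exact hz p
    · intro a b h
      exact ⟨1, by rw [hΦinj h]⟩
  refine ⟨(IsLocalization.algEquiv (∀ p : E, R ⧸ (p : PrimeSpectrum R).asIdeal)⁰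
      (FractionRing (∀ p : E, R ⧸ (p : PrimeSpectrum R).asIdeal))
      (∀ p : E, residueFieldAt (p : PrimeSpectrum R))).toRingEquiv, fun x => ?_⟩
  have := (IsLocalization.algEquiv (∀ p : E, R ⧸ (p : PrimeSpectrum R).asIdeal)⁰
      (FractionRing (∀ p : E, R ⧸ (p : PrimeSpectrum R).asIdeal))
      (∀ p : E, residueFieldAt (p : PrimeSpectrum R))).commutes
    (fun p : E => Ideal.Quotient.mk (p : PrimeSpectrum R).asIdeal x)
  rw [AlgEquiv.toRingEquiv_eq_coe, AlgEquiv.coe_ringEquiv, this, halg]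
  funext p
  rw [hΦ, resMap_mk]
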